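/- arXiv:2008.01063 — 2 statements merged into one kernel-verified Lean document; each statement's English description precedes it below -/
import Mathlib

section
/- If $\psi : X \times X \to \mathbb{R}$ is a symmetric kernel of negative type (i.e., $\psi(x,x)=0$ and $\sum_{i,j} c_i c_j \psi(x_i,x_j) \le 0$ whenever $\sum_i c_i = 0$), then for every $t \ge 0$ the kernel $(x,y) \mapsto e^{-t\,\psi(x,y)}$ is positive semidefinite: for all finite families $x_1,\dots,x_n \in X$ and real $c_1,\dots,c_n$, $\sum_{i,j} c_i c_j e^{-t\psi(x_i,x_j)} \ge 0$. -/
open Finset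

/-- Quadratic-form characterisation helper. -/
private def QF {n : ℕ} (B : Matrix (Fin n) (Fin n) ℝ) : Prop :=
  ∀ c : Fin n → ℝ, 0 ≤ ∑ i, ∑ j, c i * c j * B i j

private lemma qf_of_posSemidef {n : ℕ} {B : Matrix (Fin n) (Fin n) ℝ}
    (h : B.PosSemidef) : QF B := by
  intro c
  have := h.dotProduct_mulVec_nonneg c
  simpa [dotProduct, Matrix.mulVec, dotProduct, Finset.mul_sum,
    mul_comm, mul_left_comm, mul_assoc] using this

private lemma posSemidef_of_qf {n : ℕ} {B : Matrix (Fin n) (Fin n) ℝ}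
    (hsym : ∀ i j, B i j = B j i) (h : QF B) : B.PosSemidef := by
  rw [Matrix.posSemidef_iff_dotProduct_mulVec]
  constructor
  · ext i j
    simp [Matrix.conjTranspose, hsym i j]
  · intro c
    have := h c
    simpa [dotProduct, Matrix.mulVec, Finset.mul_sum,
      mul_comm, mul_left_comm, mul_assoc] using this

/-- Schur product theorem, quadratic form version. -/
private lemma qf_mul {n : ℕ} {A B : Matrix (Fin n) (Fin n) ℝ}
    (hAs : ∀ i j, A i j = A j i) (hBs : ∀ i j, B i j = B j i)
    (hA : QF A) (hB : QF B) : QF (fun i j => A i j * B i j) := by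
  open scoped MatrixOrder in
  obtain ⟨C, hC⟩ := CStarAlgebra.nonneg_iff_eq_star_mul_self.mp (posSemidef_of_qf hBs hB).nonneg
  intro c
  have hBentry : ∀ i j, B i j = ∑ k, C k i * C k j := by
    intro i j
    rw [hC]
    simp [Matrix.mul_apply, Matrix.star_eq_conjTranspose, Matrix.conjTranspose_apply]
  calc (0:ℝ) ≤ ∑ k, ∑ i, ∑ j, (c i * C k i) * (c j * C k j) * A i j := by
        exact Finset.sum_nonneg fun k _ => hA _
    _ = ∑ i, ∑ j, c i * c j * (A i j * B i j) := by
        rw [Finset.sum_comm]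
        refine Finset.sum_congr rfl fun i _ => ?_
        rw [Finset.sum_comm]
        refine Finset.sum_congr rfl fun j _ => ?_
        rw [hBentry i j, Finset.mul_sum, Finset.mul_sum]
        exact Finset.sum_congr rfl fun k _ => by ring

private lemma qf_pow {n : ℕ} {B : Matrix (Fin n) (Fin n) ℝ}
    (hBs : ∀ i j, B i j = B j i) (hB : QF B) (k : ℕ) :
    QF (fun i j => B i j ^ k) := by
  induction k with
  | zero =>
      intro c
      have : ∑ i, ∑ j, c i * c j * (B i j ^ 0) = (∑ i, c i) * (∑ i, c i) := by
        rw [Finset.sum_mul]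
        refine Finset.sum_congr rfl fun i _ => ?_
        rw [Finset.mul_sum]; simp
      rw [this]; exact mul_self_nonneg _
  | succ m ih =>
      have := qf_mul (fun i j => by simp [hBs i j]) hBs ih hB
      intro c
      have h2 := this c
      simpa [pow_succ, mul_comm, mul_left_comm, mul_assoc] using h2

private lemma qf_exp {n : ℕ} {B : Matrix (Fin n) (Fin n) ℝ}
    (hBs : ∀ i j, B i j = B j i) (hB : QF B) (c : Fin n → ℝ) :
    0 ≤ ∑ i, ∑ j, c i * c j * Real.exp (B i j) := by
  have hexp : ∀ x : ℝ, Real.exp x = ∑' k : ℕ, x ^ k / k.factorial := by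
    intro x
    rw [Real.exp_eq_exp_ℝ, NormedSpace.exp_eq_tsum_div]
  have hsummable : ∀ i j : Fin n, Summable (fun k : ℕ => c i * c j * (B i j ^ k / k.factorial)) := by
    intro i j
    exact (Real.summable_pow_div_factorial (B i j)).mul_left _
  calc (0:ℝ) ≤ ∑' k : ℕ, ∑ i, ∑ j, c i * c j * (B i j ^ k / k.factorial) := by
        refine tsum_nonneg fun k => ?_
        have := qf_pow hBs hB k c
        have : (0:ℝ) ≤ (1 / (k.factorial : ℝ)) * ∑ i, ∑ j, c i * c j * B i j ^ k := by
          apply mul_nonneg (by positivity) (qf_pow hBs hB k c)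
        calc (0:ℝ) ≤ (1 / (k.factorial : ℝ)) * ∑ i, ∑ j, c i * c j * B i j ^ k := this
          _ = ∑ i, ∑ j, c i * c j * (B i j ^ k / k.factorial) := by
              rw [Finset.mul_sum]
              refine Finset.sum_congr rfl fun i _ => ?_
              rw [Finset.mul_sum]
              exact Finset.sum_congr rfl fun j _ => by ring
    _ = ∑ i, ∑ j, ∑' k : ℕ, c i * c j * (B i j ^ k / k.factorial) := by
        rw [Summable.tsum_finsetSum (fun i _ => summable_sum fun j _ => hsummable i j)]
        exact Finset.sum_congr rfl fun i _ => Summable.tsum_finsetSum fun j _ => hsummable i j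
    _ = ∑ i, ∑ j, c i * c j * Real.exp (B i j) := by
        refine Finset.sum_congr rfl fun i _ => Finset.sum_congr rfl fun j _ => ?_
        rw [hexp, ← tsum_mul_left]

/-- Schoenberg's theorem: if `ψ` is a symmetric kernel of negative type, then
`exp (-t * ψ)` is positive semidefinite for every `t ≥ 0`. -/
theorem schoenberg {X : Type*} (ψ : X → X → ℝ)
    (hsymm : ∀ x y, ψ x y = ψ y x) (hdiag : ∀ x, ψ x x = 0)
    (hneg : ∀ (n : ℕ) (x : Fin n → X) (c : Fin n → ℝ), (∑ i, c i) = 0 →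
      ∑ i, ∑ j, c i * c j * ψ (x i) (x j) ≤ 0) :
    ∀ t : ℝ, 0 ≤ t → ∀ (n : ℕ) (x : Fin n → X) (c : Fin n → ℝ),
      0 ≤ ∑ i, ∑ j, c i * c j * Real.exp (-t * ψ (x i) (x j)) := by
  intro t ht n x c
  rcases Nat.eq_zero_or_pos n with hn | hn
  · subst hn; simp
  set x₀ : X := x ⟨0, hn⟩ with hx₀
  set B : Matrix (Fin n) (Fin n) ℝ :=
    fun i j => t * (ψ (x i) x₀ + ψ (x j) x₀ - ψ (x i) (x j)) with hBdef
  have hBs : ∀ i j, B i j = B j i := by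
    intro i j
    simp only [hBdef]
    rw [hsymm (x i) (x j)]
    ring
  have hQF : QF B := by
    intro d
    have key : ∑ i, ∑ j, d i * d j * ψ (x i) (x j)
        ≤ 2 * (∑ i, d i) * (∑ i, d i * ψ (x i) x₀) := by
      set s : ℝ := ∑ i, d i with hs
      have := hneg (n + 1) (Fin.cons x₀ x) (Fin.cons (-s) d)
        (by simp [Fin.sum_cons, hs])
      rw [Fin.sum_univ_succ] at this
      simp only [Fin.cons_zero, Fin.cons_succ] at this
      rw [Fin.sum_univ_succ] at this
      simp only [Fin.cons_zero, Fin.cons_succ, hdiag] at this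
      have h1 : ∑ i, (∑ j : Fin (n+1), d i
          * (Fin.cons (-s) d : Fin (n+1) → ℝ) j * ψ (x i) ((Fin.cons x₀ x : Fin (n+1) → X) j))
          = ∑ i, (d i * (-s) * ψ (x i) x₀ + ∑ j, d i * d j * ψ (x i) (x j)) := by
        refine Finset.sum_congr rfl fun i _ => ?_
        rw [Fin.sum_univ_succ]
        simp [Fin.cons_zero, Fin.cons_succ]
      rw [h1] at this
      rw [Finset.sum_add_distrib] at this
      have h2 : ∑ j, (-s) * d j * ψ x₀ (x j) = -s * ∑ j, d j * ψ (x j) x₀ := by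
        rw [Finset.mul_sum]
        exact Finset.sum_congr rfl fun j _ => by rw [hsymm x₀ (x j)]; ring
      have h3 : ∑ i, d i * (-s) * ψ (x i) x₀ = -s * ∑ j, d j * ψ (x j) x₀ := by
        rw [Finset.mul_sum]
        exact Finset.sum_congr rfl fun j _ => by ring
      rw [h2, h3] at this
      nlinarith [this]

    -- now expand the goal
    have expand : ∑ i, ∑ j, d i * d j * B i j
        = t * ((∑ i, d i * ψ (x i) x₀) * (∑ j, d j)) + t * ((∑ i, d i) * (∑ j, d j * ψ (x j) x₀))
          - t * ∑ i, ∑ j, d i * d j * ψ (x i) (x j) := by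
      rw [Finset.sum_mul_sum, Finset.sum_mul_sum, Finset.mul_sum, Finset.mul_sum, Finset.mul_sum,
        ← Finset.sum_add_distrib, ← Finset.sum_sub_distrib]
      refine Finset.sum_congr rfl fun i _ => ?_
      rw [Finset.mul_sum, Finset.mul_sum, Finset.mul_sum,
        ← Finset.sum_add_distrib, ← Finset.sum_sub_distrib]
      refine Finset.sum_congr rfl fun j _ => ?_
      simp only [hBdef]
      ring
    rw [expand]
    nlinarith [mul_nonneg ht (sub_nonneg.mpr key)]
  -- final assembly
  have hrw : ∀ i j, Real.exp (-t * ψ (x i) (x j))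
      = Real.exp (-t * ψ (x i) x₀) * Real.exp (-t * ψ (x j) x₀) * Real.exp (B i j) := by
    intro i j
    rw [← Real.exp_add, ← Real.exp_add]
    congr 1
    simp only [hBdef]
    ring
  have final := qf_exp hBs hQF (fun i => c i * Real.exp (-t * ψ (x i) x₀))
  calc (0:ℝ) ≤ ∑ i, ∑ j, (c i * Real.exp (-t * ψ (x i) x₀))
        * (c j * Real.exp (-t * ψ (x j) x₀)) * Real.exp (B i j) := final
    _ = ∑ i, ∑ j, c i * c j * Real.exp (-t * ψ (x i) (x j)) := by
        refine Finset.sum_congr rfl fun i _ => Finset.sum_congr rfl fun j _ => ?_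
        rw [hrw i j]; ring
end

section
/- For $w \in \mathbb{C}$ with $\frac{s}{2} \pm (w - \frac12)$ avoiding the nonpositive integers and $s > 1$, the infinite product $G_s(z) = \frac{s-1}{2}\prod_{k=1}^\infty\Bigl(1 - \frac{z}{4(\frac{s-3}{2}+k)(\frac{s-1}{2}+k)}\Bigr)$ evaluated at $z = -4w(1-w)$ equals $\frac{\Gamma^2(\frac{s+1}{2})}{\Gamma(\frac{s}{2}+(w-\frac12))\,\Gamma(\frac{s}{2}-(w-\frac12))}$. -/
open Complex Filter Finset Topology

/-- The entire function `G_s` defined by the stated infinite product. -/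
noncomputable def Gprod (s : ℝ) (z : ℂ) : ℂ :=
  ((s : ℂ) - 1) / 2 *
    ∏' k : ℕ, (1 - z / (4 * (((s : ℂ) - 3) / 2 + (k + 1)) * (((s : ℂ) - 1) / 2 + (k + 1))))

theorem Gprod_eval (s : ℝ) (hs : 1 < s) (w : ℂ)
    (h1 : ∀ k : ℕ, (s : ℂ) / 2 + (w - 1 / 2) ≠ -(k : ℂ))
    (h2 : ∀ k : ℕ, (s : ℂ) / 2 - (w - 1 / 2) ≠ -(k : ℂ)) :
    Gprod s (-4 * w * (1 - w))
      = (Complex.Gamma (((s : ℂ) + 1) / 2)) ^ 2 /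
        (Complex.Gamma ((s : ℂ) / 2 + (w - 1 / 2)) *
          Complex.Gamma ((s : ℂ) / 2 - (w - 1 / 2))) := by
  set x : ℂ := (s : ℂ) / 2 + (w - 1 / 2) with hx
  set y : ℂ := (s : ℂ) / 2 - (w - 1 / 2) with hy
  set p : ℂ := ((s : ℂ) - 1) / 2 with hp
  set q : ℂ := ((s : ℂ) + 1) / 2 with hq
  set f : ℕ → ℂ := fun k => (x + k) * (y + k) / ((p + k) * (q + k)) with hf
  -- basic positivity facts
  have hsp : (0 : ℝ) < (s - 1) / 2 := by linarith
  have hsq : (0 : ℝ) < (s + 1) / 2 := by linarith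
  have hpk : ∀ k : ℕ, p + k = (((s - 1) / 2 + k : ℝ) : ℂ) := by
    intro k; rw [hp]; push_cast; ring
  have hqk : ∀ k : ℕ, q + k = (((s + 1) / 2 + k : ℝ) : ℂ) := by
    intro k; rw [hq]; push_cast; ring
  have hpk0 : ∀ k : ℕ, p + k ≠ 0 := by
    intro k; rw [hpk k]
    exact_mod_cast ne_of_gt (by positivity)
  have hqk0 : ∀ k : ℕ, q + k ≠ 0 := by
    intro k; rw [hqk k]
    exact_mod_cast ne_of_gt (by positivity)
  have hxk0 : ∀ k : ℕ, x + k ≠ 0 := by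
    intro k hk; exact h1 k (by linear_combination hk)
  have hyk0 : ∀ k : ℕ, y + k ≠ 0 := by
    intro k hk; exact h2 k (by linear_combination hk)
  have hfk0 : ∀ k : ℕ, f k ≠ 0 := fun k =>
    div_ne_zero (mul_ne_zero (hxk0 k) (hyk0 k)) (mul_ne_zero (hpk0 k) (hqk0 k))
  -- the factors of Gprod equal f
  have hfeq : ∀ k : ℕ,
      (1 - (-4 * w * (1 - w)) / (4 * (((s : ℂ) - 3) / 2 + ((k : ℂ) + 1)) * (p + ((k : ℂ) + 1))))
        = f k := by
    intro k
    have e1 : ((s : ℂ) - 3) / 2 + ((k : ℂ) + 1) = p + k := by rw [hp]; ring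
    have e2 : p + ((k : ℂ) + 1) = q + k := by rw [hp, hq]; ring
    have hD : (p + (k : ℂ)) * (q + (k : ℂ)) ≠ 0 := mul_ne_zero (hpk0 k) (hqk0 k)
    have key : (x + (k : ℂ)) * (y + (k : ℂ)) = (p + (k : ℂ)) * (q + (k : ℂ)) + w * (1 - w) := by
      rw [hx, hy, hp, hq]; ring
    rw [e1, e2, hf]
    show 1 - -4 * w * (1 - w) / (4 * (p + (k : ℂ)) * (q + (k : ℂ)))
        = (x + (k : ℂ)) * (y + (k : ℂ)) / ((p + (k : ℂ)) * (q + (k : ℂ)))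
    rw [show (4 : ℂ) * (p + (k : ℂ)) * (q + (k : ℂ)) = 4 * ((p + (k : ℂ)) * (q + (k : ℂ))) from by ring,
      show -4 * w * (1 - w) = 4 * (-(w * (1 - w))) from by ring,
      mul_div_mul_left _ _ (by norm_num : (4 : ℂ) ≠ 0), neg_div, sub_neg_eq_add,
      key, add_div, div_self hD, add_comm]
  -- norms of the correction terms
  set c : ℕ → ℂ := fun k => w * (1 - w) / ((p + k) * (q + k)) with hc
  have hfc : ∀ k : ℕ, f k = 1 + c k := by
    intro k
    have hD : (p + (k : ℂ)) * (q + (k : ℂ)) ≠ 0 := mul_ne_zero (hpk0 k) (hqk0 k)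
    have key : (x + (k : ℂ)) * (y + (k : ℂ)) = (p + (k : ℂ)) * (q + (k : ℂ)) + w * (1 - w) := by
      rw [hx, hy, hp, hq]; ring
    rw [hf, hc]
    show (x + (k : ℂ)) * (y + (k : ℂ)) / ((p + (k : ℂ)) * (q + (k : ℂ)))
      = 1 + w * (1 - w) / ((p + (k : ℂ)) * (q + (k : ℂ)))
    rw [key, add_div, div_self hD]
  have hnormc : ∀ k : ℕ, ‖c k‖ = ‖w * (1 - w)‖ / (((s - 1) / 2 + k) * ((s + 1) / 2 + k)) := by
    intro k
    have e : (p + (k : ℂ)) * (q + (k : ℂ)) = ((((s - 1) / 2 + k) * ((s + 1) / 2 + k) : ℝ) : ℂ) := by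
      rw [hpk k, hqk k]; push_cast; ring
    rw [hc]
    show ‖w * (1 - w) / ((p + (k : ℂ)) * (q + (k : ℂ)))‖ = _
    rw [norm_div, e, Complex.norm_real, Real.norm_eq_abs,
      abs_of_pos (by positivity)]
  have hsumc : Summable fun k => ‖c k‖ := by
    apply Summable.of_norm_bounded_eventually
      (g := fun k : ℕ => ‖w * (1 - w)‖ * (1 / (k : ℝ) ^ 2))
      ((Real.summable_one_div_nat_pow.mpr one_lt_two).mul_left _)
    rw [Nat.cofinite_eq_atTop]
    filter_upwards [eventually_ge_atTop 1] with k hk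
    have hk1 : (1 : ℝ) ≤ (k : ℝ) := by exact_mod_cast hk
    rw [Real.norm_eq_abs, _root_.abs_of_nonneg (norm_nonneg _), hnormc k, mul_one_div]
    apply div_le_div_of_nonneg_left (norm_nonneg _) (by positivity)
    nlinarith [sq_nonneg ((k : ℝ))]
  have hev : ∀ᶠ k in atTop, ‖c k‖ ≤ 1 / 2 := by
    have h0 := hsumc.tendsto_atTop_zero
    exact h0.eventually_le_const (by norm_num)
  have hlog : Summable fun k => Complex.log (f k) := by
    apply Summable.of_norm_bounded_eventually (g := fun k => 3 / 2 * ‖c k‖)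
      (hsumc.mul_left _)
    rw [Nat.cofinite_eq_atTop]
    filter_upwards [hev] with k hk
    rw [hfc k]
    exact Complex.norm_log_one_add_half_le_self hk
  have hprod : HasProd f (∏' k, f k) :=
    (Complex.hasProd_of_hasSum_log hfk0 hlog.hasSum).multipliable.hasProd
  -- nonvanishing of the Gammas
  have hGx : Complex.Gamma x ≠ 0 := Complex.Gamma_ne_zero fun m => h1 m
  have hGy : Complex.Gamma y ≠ 0 := Complex.Gamma_ne_zero fun m => h2 m
  -- partial products are GammaSeq ratios
  have key : ∀ n : ℕ, n ≠ 0 → ∏ j ∈ range (n + 1), f j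
      = GammaSeq p n * GammaSeq q n / (GammaSeq x n * GammaSeq y n) := by
    intro n hn
    have hnn : (n : ℂ) ≠ 0 := Nat.cast_ne_zero.mpr hn
    have hA : ∏ j ∈ range (n + 1), (x + (j : ℂ)) ≠ 0 :=
      prod_ne_zero_iff.mpr fun j _ => hxk0 j
    have hB : ∏ j ∈ range (n + 1), (y + (j : ℂ)) ≠ 0 :=
      prod_ne_zero_iff.mpr fun j _ => hyk0 j
    have hC : ∏ j ∈ range (n + 1), (p + (j : ℂ)) ≠ 0 :=
      prod_ne_zero_iff.mpr fun j _ => hpk0 j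
    have hD : ∏ j ∈ range (n + 1), (q + (j : ℂ)) ≠ 0 :=
      prod_ne_zero_iff.mpr fun j _ => hqk0 j
    have hcp : (n : ℂ) ^ x * (n : ℂ) ^ y = (n : ℂ) ^ p * (n : ℂ) ^ q := by
      rw [← Complex.cpow_add _ _ hnn, ← Complex.cpow_add _ _ hnn]
      congr 1
      rw [hx, hy, hp, hq]; ring
    have hfactl : ((Nat.factorial n : ℕ) : ℂ) ≠ 0 := by
      exact_mod_cast Nat.factorial_ne_zero n
    have hpow : ∀ z : ℂ, (n : ℂ) ^ z ≠ 0 := fun z => by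
      simp [Complex.cpow_eq_zero_iff, hnn]
    have hGpn : GammaSeq x n ≠ 0 := by
      rw [Complex.GammaSeq]
      exact div_ne_zero (mul_ne_zero (hpow x) hfactl) hA
    have lhs : ∏ j ∈ range (n + 1), f j
        = (∏ j ∈ range (n + 1), (x + (j : ℂ))) * (∏ j ∈ range (n + 1), (y + (j : ℂ)))
          / ((∏ j ∈ range (n + 1), (p + (j : ℂ))) * (∏ j ∈ range (n + 1), (q + (j : ℂ)))) := by
      rw [← prod_mul_distrib, ← prod_mul_distrib, ← prod_div_distrib]
    rw [lhs, Complex.GammaSeq, Complex.GammaSeq, Complex.GammaSeq, Complex.GammaSeq]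
    rw [div_eq_div_iff (mul_ne_zero hC hD)
      (mul_ne_zero (div_ne_zero (mul_ne_zero (hpow x) hfactl) hA)
        (div_ne_zero (mul_ne_zero (hpow y) hfactl) hB))]
    field_simp
    linear_combination hcp
  -- limits
  have hT1 : Tendsto (fun n => ∏ j ∈ range (n + 1), f j) atTop
      (𝓝 (Gamma p * Gamma q / (Gamma x * Gamma y))) := by
    refine Tendsto.congr' ?_
      (((Complex.GammaSeq_tendsto_Gamma p).mul (Complex.GammaSeq_tendsto_Gamma q)).div
        (((Complex.GammaSeq_tendsto_Gamma x).mul (Complex.GammaSeq_tendsto_Gamma y)))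
        (mul_ne_zero hGx hGy))
    filter_upwards [eventually_ne_atTop 0] with n hn
    exact (key n hn).symm
  have hT2 : Tendsto (fun n => ∏ j ∈ range (n + 1), f j) atTop (𝓝 (∏' k, f k)) :=
    hprod.tendsto_prod_nat.comp (tendsto_add_atTop_nat 1)
  have htp : ∏' k, f k = Gamma p * Gamma q / (Gamma x * Gamma y) :=
    tendsto_nhds_unique hT2 hT1
  -- assemble
  have hpne : p ≠ 0 := by
    have := hpk0 0
    simpa using this
  have hGq : Gamma q = p * Gamma p := by
    have hq1 : q = p + 1 := by rw [hp, hq]; ring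
    rw [hq1, Complex.Gamma_add_one _ hpne]
  have hG : Gprod s (-4 * w * (1 - w)) = p * ∏' k, f k := by
    rw [Gprod, hp]
    congr 1
    exact tprod_congr hfeq
  rw [hG, htp, hGq]
  ring
end
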